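/- Let S and T be independent sets of a matroid M. Then, for every partition of S into two disjoint parts S_1 and S_2 (S = S_1 ∪ S_2, S_1 ∩ S_2 = ∅), there exists a partition of T into two disjoint parts T_1 and T_2 (T = T_1 ∪ T_2, T_1 ∩ T_2 = ∅) such that S_1 ∪ T_2 and S_2 ∪ T_1 are both independent in M. -/

import Mathlib

open Set

namespace StmtAux

variable {α : Type*} {M : Matroid α} {I J K X : Set α} {u x z : α}

/-- An independent set contained in the closure of `J` has at most as many elements as `J`. -/
lemma encard_le_of_indep_subset_closure (hI : M.Indep I) (hJ : M.Indep J)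
    (hIJ : I ⊆ M.closure J) : I.encard ≤ J.encard := by
  by_contra h
  push_neg at h
  obtain ⟨e, he, hins⟩ := hJ.augment hI h
  simp only [mem_diff] at he
  have := (hJ.insert_indep_iff_of_notMem he.2).mp hins
  exact this.2 (hIJ he.1)

lemma encard_le_of_indep_subset_closure' (hI : M.Indep I) (hK : K ⊆ M.E)
    (hIK : I ⊆ M.closure K) : I.encard ≤ K.encard := by
  obtain ⟨J, hJ⟩ := M.exists_isBasis K hK
  have h1 : I ⊆ M.closure J := by rw [hJ.closure_eq_closure]; exact hIK
  exact (encard_le_of_indep_subset_closure hI hJ.indep h1).trans (encard_mono hJ.subset)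

lemma mem_closure_diff_pair (hI : M.Indep I) (hx : x ∈ I) (hz : z ∈ I) (hxz : x ≠ z)
    (hux : u ∈ M.closure (I \ {x})) (huz : u ∈ M.closure (I \ {z})) :
    u ∈ M.closure (I \ {x, z}) := by
  by_contra h
  set W := I \ {x, z} with hW
  have hIx : I \ {x} = insert z W := by
    rw [hW]; ext a; simp only [mem_diff, mem_insert_iff, mem_singleton_iff]
    constructor
    · rintro ⟨ha, hax⟩
      by_cases haz : a = z
      · exact Or.inl haz
      · exact Or.inr ⟨ha, by tauto⟩
    · rintro (rfl | ⟨ha, h2⟩)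
      · exact ⟨hz, fun hc => hxz hc.symm⟩
      · exact ⟨ha, fun hc => h2 (Or.inl hc)⟩
  have hIz : I \ {z} = insert x W := by
    rw [hW]; ext a; simp only [mem_diff, mem_insert_iff, mem_singleton_iff]
    constructor
    · rintro ⟨ha, haz⟩
      by_cases hax : a = x
      · exact Or.inl hax
      · exact Or.inr ⟨ha, by tauto⟩
    · rintro (rfl | ⟨ha, h2⟩)
      · exact ⟨hx, hxz⟩
      · exact ⟨ha, fun hc => h2 (Or.inr hc)⟩
  rw [hIx] at hux
  rw [hIz] at huz
  have hexch : x ∈ M.closure (insert u W) \ M.closure W :=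
    Matroid.closure_exchange ⟨huz, h⟩
  have huzc : M.closure (insert u (insert z W)) = M.closure (insert z W) :=
    Matroid.closure_insert_eq_of_mem_closure hux
  have hsub : insert u W ⊆ insert u (insert z W) := insert_subset_insert (subset_insert _ _)
  have : x ∈ M.closure (I \ {x}) := by
    rw [hIx, ← huzc]
    exact M.closure_subset_closure hsub hexch.1
  exact hI.notMem_closure_diff_of_mem hx this

lemma mem_closure_diff_of_forall {D : Set α} (hI : M.Indep I) (hfin : I.Finite)
    (hD : D ⊆ I) (hu : u ∈ M.closure I) (h : ∀ x ∈ D, u ∈ M.closure (I \ {x})) :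
    u ∈ M.closure (I \ D) := by
  have hDfin : D.Finite := hfin.subset hD
  generalize hn : D.ncard = n
  induction n generalizing D I with
  | zero =>
    have : D = ∅ := (Set.ncard_eq_zero hDfin).mp hn
    subst this; simpa using hu
  | succ n ih =>
    obtain ⟨a, haD⟩ : D.Nonempty := Set.nonempty_of_ncard_ne_zero (by omega)
    have haI : a ∈ I := hD haD
    have hI' : M.Indep (I \ {a}) := hI.diff _
    have hua : u ∈ M.closure (I \ {a}) := h a haD
    set D' : Set α := D \ {a} with hD'def
    have hD'sub : D' ⊆ I \ {a} := fun z hz => ⟨hD hz.1, hz.2⟩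
    have hstep : ∀ z ∈ D', u ∈ M.closure ((I \ {a}) \ {z}) := by
      intro z hz
      have hzI : z ∈ I := hD hz.1
      have hza : a ≠ z := fun hc => hz.2 (by simp [hc.symm])
      have h2 := mem_closure_diff_pair hI haI hzI hza hua (h z hz.1)
      have hset : I \ {a, z} = (I \ {a}) \ {z} := by rw [diff_diff]; rfl
      rwa [hset] at h2
    have hcard : D'.ncard = n := by
      rw [hD'def, Set.ncard_diff_singleton_of_mem haD]; omega
    have hres := ih hI' (hfin.subset diff_subset) hD'sub hua hstep
      (hDfin.subset diff_subset) hcard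
    have hset : (I \ {a}) \ D' = I \ D := by
      rw [diff_diff, hD'def]
      congr 1
      rw [union_diff_cancel (by simpa using haD)]
    rwa [hset] at hres

/-- The "fundamental circuit" of `u` with respect to an independent set `I`. -/
def fc (M : Matroid α) (I : Set α) (u : α) : Set α := {x ∈ I | u ∉ M.closure (I \ {x})}

lemma fc_subset (M : Matroid α) (I : Set α) (u : α) : fc M I u ⊆ I := fun _ h => h.1

lemma mem_closure_fc (hI : M.Indep I) (hfin : I.Finite) (hu : u ∈ M.closure I) :
    u ∈ M.closure (fc M I u) := by
  have hD : I \ fc M I u ⊆ I := diff_subset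
  have h : ∀ x ∈ I \ fc M I u, u ∈ M.closure (I \ {x}) := by
    intro x hx
    by_contra hc
    exact hx.2 ⟨hx.1, hc⟩
  have := mem_closure_diff_of_forall hI hfin hD hu h
  rwa [diff_diff_cancel_left (fc_subset M I u)] at this

lemma indep_exchange_fc (hI : M.Indep I) (hx : x ∈ fc M I u) (huI : u ∉ I) (huE : u ∈ M.E) :
    M.Indep (insert u (I \ {x})) := by
  have h1 : M.Indep (I \ {x}) := hI.diff _
  rw [h1.insert_indep_iff_of_notMem (fun hc => huI hc.1)]
  exact ⟨huE, hx.2⟩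


/-- Arc relation for the augmenting-path argument.  Side 1 is `P ∪ A`, side 2 is `Q ∪ B`,
`e` is the element being inserted. -/
def arcD (M : Matroid α) (P Q A B : Set α) (e u v : α) : Prop :=
  ((u = e ∨ u ∈ B) ∧ u ∈ M.closure (P ∪ A) ∧ v ∈ fc M (P ∪ A) u ∧ v ∈ A) ∨
  ((u = e ∨ u ∈ A) ∧ u ∈ M.closure (Q ∪ B) ∧ v ∈ fc M (Q ∪ B) u ∧ v ∈ B)

def freeD (M : Matroid α) (P Q A B : Set α) (e u : α) : Prop :=
  ((u = e ∨ u ∈ B) ∧ u ∉ M.closure (P ∪ A)) ∨ ((u = e ∨ u ∈ A) ∧ u ∉ M.closure (Q ∪ B))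

lemma arcD_swap {P Q A B : Set α} {e u v : α} :
    arcD M Q P B A e u v ↔ arcD M P Q A B e u v := or_comm

lemma freeD_swap {P Q A B : Set α} {e u : α} :
    freeD M Q P B A e u ↔ freeD M P Q A B e u := or_comm

lemma arcD_target {P Q A B : Set α} {e u v : α} (h : arcD M P Q A B e u v) : v ∈ A ∪ B := by
  rcases h with h | h
  · exact Or.inl h.2.2.2
  · exact Or.inr h.2.2.2

lemma chain'_targets {R : α → α → Prop} {p : α → Prop} (hR : ∀ a b, R a b → p b) :
    ∀ {l : List α} {a : α}, List.Chain' R (a :: l) → ∀ z ∈ l, p z := by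
  intro l
  induction l with
  | nil => intro a _ z hz; cases hz
  | cons b l ih =>
    intro a hch z hz
    replace hch := List.isChain_cons_cons.mp hch
    rcases List.mem_cons.mp hz with rfl | hz
    · exact hR a z hch.1
    · exact ih hch.2 z hz

lemma chain'_mono_mem {R S : α → α → Prop} :
    ∀ {l : List α}, (∀ a ∈ l, ∀ b ∈ l.tail, R a b → S a b) → List.Chain' R l → List.Chain' S l := by
  intro l
  induction l with
  | nil => intros; exact List.isChain_nil
  | cons a l ih =>
    intro h hch
    cases l with
    | nil => exact List.isChain_singleton a
    | cons b l' =>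
      replace hch := List.isChain_cons_cons.mp hch
      show List.IsChain _ _; rw [List.isChain_cons_cons]
      refine ⟨h a (by simp) b (by simp) hch.1, ih ?_ hch.2⟩
      intro x hx y hy hxy
      exact h x (by simp [hx]) y (by simp only [List.tail_cons] at hy ⊢; exact List.mem_cons_of_mem _ hy) hxy


section OneStep

variable {TT P Q A B : Set α} {e v w : α} {l : List α}

lemma one_step (hTT : M.Indep TT)
    (hPQT : Disjoint (P ∪ Q) TT) (hA : A ⊆ TT) (hB : B ⊆ TT) (he : e ∈ TT)
    (hAB : Disjoint A B) (heAB : e ∉ A ∪ B)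
    (hIA : M.Indep (P ∪ A)) (hIB : M.Indep (Q ∪ B))
    (hch : List.Chain' (arcD M P Q A B e) (e :: v :: l))
    (hlastw : (e :: v :: l).getLast? = some w)
    (hfree : freeD M P Q A B e w)
    (hecl : e ∈ M.closure (P ∪ A)) (hvfc : v ∈ fc M (P ∪ A) e) (hvA : v ∈ A)
    (hmin : ∀ l₂ : List α, ∀ w₂ : α, List.Chain' (arcD M P Q A B e) (e :: l₂) →
      (e :: l₂).getLast? = some w₂ → freeD M P Q A B e w₂ →
      (e :: l₂).length < (e :: v :: l).length → False) :
    M.Indep (P ∪ insert e (A \ {v})) ∧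
    List.Chain' (arcD M P Q (insert e (A \ {v})) B v) (v :: l) ∧
    (v :: l).getLast? = some w ∧
    freeD M P Q (insert e (A \ {v})) B v w := by
  have heE : e ∈ M.E := hTT.subset_ground he
  have heP : e ∉ P := fun hc => (hPQT.le_bot ⟨Or.inl hc, he⟩ : False)
  have heA : e ∉ A := fun hc => heAB (Or.inl hc)
  have heB : e ∉ B := fun hc => heAB (Or.inr hc)
  have hveq : e ≠ v := fun hc => heA (hc ▸ hvA)
  have hePA : e ∉ P ∪ A := fun hc => hc.elim heP heA
  have hvPA : v ∈ P ∪ A := Or.inr hvA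
  have hsetA : P ∪ insert e (A \ {v}) = insert e ((P ∪ A) \ {v}) := by
    have hvP : v ∉ P := fun hc => (hPQT.le_bot ⟨Or.inl hc, hA hvA⟩ : False)
    ext a
    simp only [mem_union, mem_insert_iff, mem_diff, mem_singleton_iff]
    constructor
    · rintro (haP | rfl | ⟨haA, hav⟩)
      · exact Or.inr ⟨Or.inl haP, fun hc => hvP (hc ▸ haP)⟩
      · exact Or.inl rfl
      · exact Or.inr ⟨Or.inr haA, hav⟩
    · rintro (rfl | ⟨haPA | haA, hav⟩)
      · exact Or.inr (Or.inl rfl)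
      · exact Or.inl haPA
      · exact Or.inr (Or.inr ⟨haA, hav⟩)
  have hI1' : M.Indep (P ∪ insert e (A \ {v})) := by
    rw [hsetA]
    exact indep_exchange_fc hIA hvfc hePA heE
  -- closure invariance
  have hins : insert v ((P ∪ A) \ {v}) = P ∪ A := by
    rw [insert_diff_singleton]
    exact insert_eq_of_mem hvPA
  have hclinv : M.closure (P ∪ insert e (A \ {v})) = M.closure (P ∪ A) := by
    rw [hsetA]
    have h1 : e ∈ M.closure (insert v ((P ∪ A) \ {v})) \ M.closure ((P ∪ A) \ {v}) := by
      rw [hins]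
      exact ⟨hecl, hvfc.2⟩
    have h2 := Matroid.closure_exchange h1
    have h3 : M.closure (insert v (insert e ((P ∪ A) \ {v}))) =
        M.closure (insert e ((P ∪ A) \ {v})) := by
      rw [Matroid.closure_insert_eq_of_mem_closure h2.1]
    have h4 : insert v (insert e ((P ∪ A) \ {v})) = insert e (P ∪ A) := by
      rw [Set.insert_comm, hins]
    rw [← h3, h4, Matroid.closure_insert_eq_of_mem_closure hecl]
  -- elements of the tail are in A ∪ B
  have htail : ∀ z ∈ v :: l, z ∈ A ∪ B :=
    fun z hz => by
      rcases List.mem_cons.mp hz with rfl | hz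
      · exact Or.inl hvA
      · exact chain'_targets (fun a b h => arcD_target h) (List.isChain_cons_cons.mp hch).2 z hz
  have htail_ne : ∀ z ∈ v :: l, z ≠ e := fun z hz hc => heAB (hc ▸ htail z hz)
  -- v does not occur in l (minimality)
  have hvl : v ∉ l := by
    intro hvl
    obtain ⟨l₁, l₂, rfl⟩ := List.append_of_mem hvl
    have hsuf : List.Chain' (arcD M P Q A B e) (v :: l₂) :=
      hch.suffix ⟨e :: v :: l₁, by simp⟩
    have hch2 : List.Chain' (arcD M P Q A B e) (e :: v :: l₂) :=
      List.isChain_cons_cons.mpr ⟨Or.inl ⟨Or.inl rfl, hecl, hvfc, hvA⟩, hsuf⟩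
    have hlast2 : (e :: v :: l₂).getLast? = some w := by
      have h1 : (e :: v :: (l₁ ++ v :: l₂)) = (e :: v :: l₁) ++ (v :: l₂) := by simp
      rw [h1, List.getLast?_append_of_ne_nil _ (by simp)] at hlastw
      rw [show (e :: v :: l₂) = [e] ++ (v :: l₂) by simp,
        List.getLast?_append_of_ne_nil _ (by simp)]
      exact hlastw
    exact hmin (v :: l₂) w hch2 hlast2 hfree (by simp)
  -- no shortcut from e into later elements of the path (minimality)
  have hshort : ∀ z ∈ l, z ∈ A → e ∈ M.closure ((P ∪ A) \ {z}) := by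
    intro z hzl hzA
    by_contra hnc
    have hzfc : z ∈ fc M (P ∪ A) e := ⟨Or.inr hzA, hnc⟩
    obtain ⟨l₁, l₂, rfl⟩ := List.append_of_mem hzl
    have hsuf : List.Chain' (arcD M P Q A B e) (z :: l₂) :=
      hch.suffix ⟨e :: v :: l₁, by simp⟩
    have hch2 : List.Chain' (arcD M P Q A B e) (e :: z :: l₂) :=
      List.isChain_cons_cons.mpr ⟨Or.inl ⟨Or.inl rfl, hecl, hzfc, hzA⟩, hsuf⟩
    have hlast2 : (e :: z :: l₂).getLast? = some w := by
      have h1 : (e :: v :: (l₁ ++ z :: l₂)) = (e :: v :: l₁) ++ (z :: l₂) := by simp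
      rw [h1, List.getLast?_append_of_ne_nil _ (by simp)] at hlastw
      rw [show (e :: z :: l₂) = [e] ++ (z :: l₂) by simp,
        List.getLast?_append_of_ne_nil _ (by simp)]
      exact hlastw
    exact hmin (z :: l₂) w hch2 hlast2 hfree (by simp)
  have hwmem : w ∈ v :: l := by
    have := List.mem_getLast?_eq_getLast (l := e :: v :: l) hlastw
    obtain ⟨h1, h2⟩ := this
    rw [List.getLast?_cons_cons] at hlastw
    have := List.mem_of_mem_getLast? (l := v :: l) hlastw
    exact this
  refine ⟨hI1', ?_, ?_, ?_⟩
  · -- chain transfer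
    have hch0 : List.Chain' (arcD M P Q A B e) (v :: l) := (List.isChain_cons_cons.mp hch).2
    refine chain'_mono_mem ?_ hch0
    intro a ha b hb harc
    rcases harc with ⟨hu, hucl, hbfc, hbA⟩ | ⟨hu, hucl, hbfc, hbB⟩
    · -- side 1 arc
      have haB : a ∈ B := by
        rcases hu with rfl | h
        · exact absurd rfl (htail_ne a ha)
        · exact h
      have hbv : b ≠ v := fun hc => hvl (hc ▸ hb)
      refine Or.inl ⟨Or.inr haB, by rwa [hclinv], ⟨?_, ?_⟩, mem_insert_of_mem _ ⟨hbA, hbv⟩⟩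
      · exact Or.inr (mem_insert_of_mem _ ⟨hbA, hbv⟩)
      · -- a ∉ closure ((P ∪ insert e (A \ {v})) \ {b})
        have hecl2 : e ∈ M.closure ((P ∪ A) \ {b}) := hshort b hb hbA
        have hclsub : M.closure ((P ∪ insert e (A \ {v})) \ {b}) ⊆
            M.closure ((P ∪ A) \ {b}) := by
          refine Matroid.closure_subset_closure_of_subset_closure ?_
          intro y hy
          rcases hy with ⟨hy1, hy2⟩
          rw [hsetA] at hy1
          rcases hy1 with rfl | hy1
          · exact hecl2
          · exact M.mem_closure_of_mem' ⟨hy1.1, hy2⟩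
              (hIA.subset_ground hy1.1)
        exact fun hc => hbfc.2 (hclsub hc)
    · -- side 2 arc
      have haA : a = e ∨ a ∈ A := hu
      rcases haA with rfl | haA
      · exact absurd rfl (htail_ne a ha)
      · by_cases hav : a = v
        · subst hav
          exact Or.inr ⟨Or.inl rfl, hucl, hbfc, hbB⟩
        · exact Or.inr ⟨Or.inr (mem_insert_of_mem _ ⟨haA, hav⟩), hucl, hbfc, hbB⟩
  · rw [List.getLast?_cons_cons] at hlastw
    exact hlastw
  · -- free transfer
    rcases hfree with ⟨hw1, hwcl⟩ | ⟨hw1, hwcl⟩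
    · have hwB : w ∈ B := by
        rcases hw1 with hc | h
        · exact absurd hc (htail_ne w hwmem)
        · exact h
      exact Or.inl ⟨Or.inr hwB, by rwa [hclinv]⟩
    · rcases hw1 with hc | hwA
      · exact absurd hc (htail_ne w hwmem)
      · rcases List.mem_cons.mp hwmem with rfl | hwl
        · exact Or.inr ⟨Or.inl rfl, hwcl⟩
        · have hwv : w ≠ v := fun hc => hvl (hc ▸ hwl)
          exact Or.inr ⟨Or.inr (mem_insert_of_mem _ ⟨hwA, hwv⟩), hwcl⟩

end OneStep


section StepAll

variable {TT : Set α}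

lemma chain'_arcD_swap {P Q A B : Set α} {e : α} {l : List α}
    (h : List.Chain' (arcD M P Q A B e) l) : List.Chain' (arcD M Q P B A e) l :=
  h.imp (fun _ _ hab => arcD_swap.mpr hab)

lemma disj_insert_left {a : α} {s t : Set α} (ha : a ∉ t) (h : Disjoint s t) :
    Disjoint (insert a s) t := by
  rw [Set.disjoint_left] at h ⊢
  rintro b (rfl | hb) hbt
  · exact ha hbt
  · exact h hb hbt

lemma step_all (hTT : M.Indep TT) :
    ∀ n : ℕ, ∀ P Q A B : Set α, ∀ e : α,
    Disjoint (P ∪ Q) TT → A ⊆ TT → B ⊆ TT → e ∈ TT → Disjoint A B → e ∉ A ∪ B →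
    M.Indep (P ∪ A) → M.Indep (Q ∪ B) →
    (∃ l w, List.Chain' (arcD M P Q A B e) (e :: l) ∧ (e :: l).getLast? = some w ∧
      freeD M P Q A B e w ∧ (e :: l).length = n) →
    ∃ A' B', A' ∪ B' = A ∪ B ∪ {e} ∧ Disjoint A' B' ∧ M.Indep (P ∪ A') ∧ M.Indep (Q ∪ B') := by
  intro n
  induction n using Nat.strong_induction_on with
  | _ n ih =>
  intro P Q A B e hPQT hA hB he hAB heAB hIA hIB hpath
  obtain ⟨l, w, hch, hlw, hfree, hlen⟩ := hpath
  have heE : e ∈ M.E := hTT.subset_ground he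
  have heP : e ∉ P := fun hc => (hPQT.le_bot ⟨Or.inl hc, he⟩ : False)
  have heQ : e ∉ Q := fun hc => (hPQT.le_bot ⟨Or.inr hc, he⟩ : False)
  have heA : e ∉ A := fun hc => heAB (Or.inl hc)
  have heB : e ∉ B := fun hc => heAB (Or.inr hc)
  by_cases hmin' : ∃ m < n, ∃ l₂ w₂, List.Chain' (arcD M P Q A B e) (e :: l₂) ∧
      (e :: l₂).getLast? = some w₂ ∧ freeD M P Q A B e w₂ ∧ (e :: l₂).length = m
  · obtain ⟨m, hm, l₂, w₂, h1, h2, h3, h4⟩ := hmin'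
    exact ih m hm P Q A B e hPQT hA hB he hAB heAB hIA hIB ⟨l₂, w₂, h1, h2, h3, h4⟩
  · push_neg at hmin'
    have hmin : ∀ l₂ : List α, ∀ w₂ : α, List.Chain' (arcD M P Q A B e) (e :: l₂) →
        (e :: l₂).getLast? = some w₂ → freeD M P Q A B e w₂ →
        (e :: l₂).length < n → False := by
      intro l₂ w₂ h1 h2 h3 h4
      exact hmin' (e :: l₂).length h4 l₂ w₂ h1 h2 h3 rfl
    cases l with
    | nil =>
      -- path [e] : e is free
      have hwe : e = w := by simpa using hlw
      subst hwe
      rcases hfree with ⟨_, hecl⟩ | ⟨_, hecl⟩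
      · refine ⟨insert e A, B, ?_, ?_, ?_, hIB⟩
        · ext a; simp only [mem_union, mem_insert_iff, mem_singleton_iff]; tauto
        · exact disj_insert_left heB hAB
        · rw [Set.union_insert]
          exact (hIA.insert_indep_iff_of_notMem (fun hc => hc.elim heP heA)).mpr ⟨heE, hecl⟩
      · refine ⟨A, insert e B, ?_, ?_, hIA, ?_⟩
        · ext a; simp only [mem_union, mem_insert_iff, mem_singleton_iff]; tauto
        · exact (disj_insert_left heA hAB.symm).symm
        · rw [Set.union_insert]
          exact (hIB.insert_indep_iff_of_notMem (fun hc => hc.elim heQ heB)).mpr ⟨heE, hecl⟩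
    | cons v l' =>
      have harc := (List.isChain_cons_cons.mp hch).1
      have hlen' : (e :: v :: l').length = n := hlen
      rcases harc with ⟨_, hecl, hvfc, hvA⟩ | ⟨_, hecl, hvfc, hvB⟩
      · -- first arc on side 1
        obtain ⟨hI1', hch', hlast', hfree'⟩ :=
          one_step hTT hPQT hA hB he hAB heAB hIA hIB hch hlw hfree hecl hvfc hvA
            (fun l₂ w₂ a b c d => hmin l₂ w₂ a b c (by rw [hlen] at d; exact d))
        have hvT : v ∈ TT := hA hvA
        have hvB : v ∉ B := fun hc => (hAB.le_bot ⟨hvA, hc⟩ : False)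
        have hve : v ≠ e := fun hc => heA (hc ▸ hvA)
        obtain ⟨A₂, B₂, hunion, hdisj, hPA₂, hQB₂⟩ :=
          ih (v :: l').length (by simp only [List.length_cons] at hlen ⊢; omega)
            P Q (insert e (A \ {v})) B v hPQT
            (insert_subset he (diff_subset.trans hA))
            hB hvT
            (disj_insert_left heB (disjoint_of_subset_left diff_subset hAB))
            (by
              intro hc
              rcases hc with hc | hc
              · rcases hc with hc | hc
                · exact hve hc
                · exact hc.2 rfl
              · exact hvB hc)
            hI1' hIB ⟨l', w, hch', hlast', hfree', rfl⟩
        refine ⟨A₂, B₂, ?_, hdisj, hPA₂, hQB₂⟩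
        rw [hunion]
        ext a
        simp only [mem_union, mem_insert_iff, mem_diff, mem_singleton_iff]
        constructor
        · rintro ((h | h) | h)
          · rcases h with rfl | ⟨h1, _⟩
            · exact Or.inr rfl
            · exact Or.inl (Or.inl h1)
          · exact Or.inl (Or.inr h)
          · exact Or.inl (Or.inl (h ▸ hvA))
        · rintro ((h | h) | h)
          · by_cases hav : a = v
            · exact Or.inr hav
            · exact Or.inl (Or.inl (Or.inr ⟨h, hav⟩))
          · exact Or.inl (Or.inr h)
          · exact Or.inl (Or.inl (Or.inl h))
      · -- first arc on side 2 : apply the symmetric argument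
        obtain ⟨hI2', hch', hlast', hfree'⟩ :=
          one_step (M := M) hTT (by rwa [Set.union_comm]) hB hA he hAB.symm
            (fun hc => heAB (Or.symm hc))
            hIB hIA (chain'_arcD_swap hch)
            hlw (freeD_swap.mpr hfree) hecl hvfc hvB
            (fun l₂ w₂ a b c d =>
              hmin l₂ w₂ (chain'_arcD_swap a) b (freeD_swap.mp c)
                (by rw [hlen] at d; exact d))
        have hvT : v ∈ TT := hB hvB
        have hvA : v ∉ A := fun hc => (hAB.le_bot ⟨hc, hvB⟩ : False)
        have hve : v ≠ e := fun hc => heB (hc ▸ hvB)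
        obtain ⟨B₂, A₂, hunion, hdisj, hQB₂, hPA₂⟩ :=
          ih (v :: l').length (by simp only [List.length_cons] at hlen ⊢; omega)
            Q P (insert e (B \ {v})) A v
            (by rwa [Set.union_comm])
            (insert_subset he (diff_subset.trans hB))
            hA hvT
            (disj_insert_left heA (disjoint_of_subset_left diff_subset hAB.symm))
            (by
              intro hc
              rcases hc with hc | hc
              · rcases hc with hc | hc
                · exact hve hc
                · exact hc.2 rfl
              · exact hvA hc)
            hI2' hIA ⟨l', w, hch', hlast', hfree', rfl⟩
        refine ⟨A₂, B₂, ?_, hdisj.symm, hPA₂, hQB₂⟩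
        rw [show A₂ ∪ B₂ = B₂ ∪ A₂ from Set.union_comm _ _, hunion]
        ext a
        simp only [mem_union, mem_insert_iff, mem_diff, mem_singleton_iff]
        constructor
        · rintro ((h | h) | h)
          · rcases h with rfl | ⟨h1, _⟩
            · exact Or.inr rfl
            · exact Or.inl (Or.inr h1)
          · exact Or.inl (Or.inl h)
          · exact Or.inl (Or.inr (h ▸ hvB))
        · rintro ((h | h) | h)
          · exact Or.inl (Or.inr h)
          · by_cases hav : a = v
            · exact Or.inr hav
            · exact Or.inl (Or.inl (Or.inr ⟨h, hav⟩))
          · exact Or.inl (Or.inl (Or.inl h))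

end StepAll


section Counting

variable {TT P Q A B : Set α} {e : α}

lemma chain'_snoc {R : α → α → Prop} {l : List α} {x u v : α}
    (hch : List.Chain' R (x :: l)) (hl : (x :: l).getLast? = some u) (huv : R u v) :
    List.Chain' R (x :: (l ++ [v])) ∧ (x :: (l ++ [v])).getLast? = some v := by
  constructor
  · rw [show x :: (l ++ [v]) = (x :: l) ++ [v] by simp]
    show List.IsChain R ((x :: l) ++ [v]); rw [List.isChain_append]
    refine ⟨hch, List.isChain_singleton v, ?_⟩
    intro p hp q hq
    simp only [List.head?_cons, Option.mem_def, Option.some.injEq] at hq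
    rw [hl] at hp
    simp only [Option.mem_def, Option.some.injEq] at hp
    subst hp; subst hq
    exact huv
  · rw [show x :: (l ++ [v]) = (x :: l) ++ [v] by simp,
      List.getLast?_append_of_ne_nil _ (by simp)]
    rfl

lemma exists_free_path [M.Finite] (hTT : M.Indep TT)
    (hPQ : M.Indep (P ∪ Q)) (hdPQ : Disjoint P Q) (hPQT : Disjoint (P ∪ Q) TT)
    (hA : A ⊆ TT) (hB : B ⊆ TT) (he : e ∈ TT) (hAB : Disjoint A B) (heAB : e ∉ A ∪ B)
    (hIA : M.Indep (P ∪ A)) (hIB : M.Indep (Q ∪ B)) :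
    ∃ l w, List.Chain' (arcD M P Q A B e) (e :: l) ∧ (e :: l).getLast? = some w ∧
      freeD M P Q A B e w := by
  by_contra hcon
  push_neg at hcon
  have heA : e ∉ A := fun hc => heAB (Or.inl hc)
  have heB : e ∉ B := fun hc => heAB (Or.inr hc)
  -- the set of reachable elements
  set R : Set α := {u | ∃ l : List α, List.Chain' (arcD M P Q A B e) (e :: l) ∧
    (e :: l).getLast? = some u} with hR
  have heR : e ∈ R := ⟨[], List.isChain_singleton e, rfl⟩
  have hblock : ∀ u ∈ R, ((u = e ∨ u ∈ B) → u ∈ M.closure (P ∪ A)) ∧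
      ((u = e ∨ u ∈ A) → u ∈ M.closure (Q ∪ B)) := by
    rintro u ⟨l, hch, hl⟩
    have hnf : ¬ freeD M P Q A B e u := hcon l u hch hl
    rw [freeD] at hnf
    push_neg at hnf
    exact hnf
  have hext1 : ∀ u ∈ R, (u = e ∨ u ∈ B) → ∀ v, v ∈ fc M (P ∪ A) u → v ∈ A → v ∈ R := by
    rintro u ⟨l, hch, hl⟩ hu v hvfc hvA
    have harc : arcD M P Q A B e u v :=
      Or.inl ⟨hu, (hblock u ⟨l, hch, hl⟩).1 hu, hvfc, hvA⟩
    obtain ⟨h1, h2⟩ := chain'_snoc hch hl harc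
    exact ⟨l ++ [v], h1, h2⟩
  have hext2 : ∀ u ∈ R, (u = e ∨ u ∈ A) → ∀ v, v ∈ fc M (Q ∪ B) u → v ∈ B → v ∈ R := by
    rintro u ⟨l, hch, hl⟩ hu v hvfc hvB
    have harc : arcD M P Q A B e u v :=
      Or.inr ⟨hu, (hblock u ⟨l, hch, hl⟩).2 hu, hvfc, hvB⟩
    obtain ⟨h1, h2⟩ := chain'_snoc hch hl harc
    exact ⟨l ++ [v], h1, h2⟩
  -- counting contradiction
  set X₂ : Set α := R ∩ A with hX₂
  set X₁ : Set α := (R ∩ B) ∪ {e} with hX₁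
  set X : Set α := X₁ ∪ X₂ with hX
  have hXsub : X ⊆ TT := by
    rintro a ((⟨_, haB⟩ | rfl) | ⟨_, haA⟩)
    · exact hB haB
    · exact he
    · exact hA haA
  have hXindep : M.Indep X := hTT.subset hXsub
  have hTE : TT ⊆ M.E := hTT.subset_ground
  have hPQE : P ∪ Q ⊆ M.E := hPQ.subset_ground
  have hfinPA : (P ∪ A).Finite := M.set_finite _ (hIA.subset_ground)
  have hfinQB : (Q ∪ B).Finite := M.set_finite _ (hIB.subset_ground)
  -- X₁ is spanned by P ∪ X₂
  have hX1cl : X₁ ⊆ M.closure (P ∪ X₂) := by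
    intro u hu
    have huR : u ∈ R := by
      rcases hu with ⟨h, _⟩ | rfl
      · exact h
      · exact heR
    have hu1 : u = e ∨ u ∈ B := by
      rcases hu with ⟨_, h⟩ | rfl
      · exact Or.inr h
      · exact Or.inl rfl
    have hucl : u ∈ M.closure (P ∪ A) := (hblock u huR).1 hu1
    have h1 : u ∈ M.closure (fc M (P ∪ A) u) := mem_closure_fc hIA hfinPA hucl
    refine M.closure_subset_closure ?_ h1
    intro v hv
    rcases hv.1 with hvP | hvA
    · exact Or.inl hvP
    · exact Or.inr ⟨hext1 u huR hu1 v hv hvA, hvA⟩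
  -- X₂ ∪ {e} is spanned by Q ∪ (R ∩ B)
  have hX2cl : X₂ ∪ {e} ⊆ M.closure (Q ∪ (R ∩ B)) := by
    intro u hu
    have huR : u ∈ R := by
      rcases hu with ⟨h, _⟩ | rfl
      · exact h
      · exact heR
    have hu1 : u = e ∨ u ∈ A := by
      rcases hu with ⟨_, h⟩ | rfl
      · exact Or.inr h
      · exact Or.inl rfl
    have hucl : u ∈ M.closure (Q ∪ B) := (hblock u huR).2 hu1
    have h1 : u ∈ M.closure (fc M (Q ∪ B) u) := mem_closure_fc hIB hfinQB hucl
    refine M.closure_subset_closure ?_ h1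
    intro v hv
    rcases hv.1 with hvQ | hvB
    · exact Or.inl hvQ
    · exact Or.inr ⟨hext2 u huR hu1 v hv hvB, hvB⟩
  -- two bases of X ∪ P and X ∪ Q
  have hW2 : M.Indep (P ∪ X₂) := hIA.subset (union_subset_union_right _ inter_subset_right)
  have hW1 : M.Indep (Q ∪ (R ∩ B)) := hIB.subset (union_subset_union_right _ inter_subset_right)
  have hW2basis : M.IsBasis (P ∪ X₂) (X ∪ P) := by
    refine hW2.isBasis_of_subset_of_subset_closure ?_ ?_
    · rintro a (haP | haX)
      · exact Or.inr haP
      · exact Or.inl (Or.inr haX)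
    · rintro a (haX | haP)
      · rcases haX with haX1 | haX2
        · exact hX1cl haX1
        · exact M.mem_closure_of_mem' (Or.inr haX2) (hTE (hA haX2.2))
      · exact M.mem_closure_of_mem' (Or.inl haP) (hPQE (Or.inl haP))
  have hW1basis : M.IsBasis (Q ∪ (R ∩ B)) (X ∪ Q) := by
    refine hW1.isBasis_of_subset_of_subset_closure ?_ ?_
    · rintro a (haQ | haRB)
      · exact Or.inr haQ
      · exact Or.inl (Or.inl (Or.inl haRB))
    · rintro a (haX | haQ)
      · rcases haX with haX1 | haX2
        · rcases haX1 with haRB | rfl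
          · exact M.mem_closure_of_mem' (Or.inr haRB) (hTE (hB haRB.2))
          · exact hX2cl (Or.inr rfl)
        · exact hX2cl (Or.inl haX2)
      · exact M.mem_closure_of_mem' (Or.inl haQ) (hPQE (Or.inr haQ))
  obtain ⟨J₂, hJ₂basis, hXJ₂⟩ := hXindep.subset_isBasis_of_subset
    (subset_union_left) (union_subset (hXsub.trans hTE) (fun a ha => hPQE (Or.inl ha)))
  obtain ⟨J₁, hJ₁basis, hXJ₁⟩ := hXindep.subset_isBasis_of_subset
    (subset_union_left) (union_subset (hXsub.trans hTE) (fun a ha => hPQE (Or.inr ha)))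
  have hc2 : J₂.encard = (P ∪ X₂).encard := hJ₂basis.encard_eq_encard hW2basis
  have hc1 : J₁.encard = (Q ∪ (R ∩ B)).encard := hJ₁basis.encard_eq_encard hW1basis
  -- P ∪ Q is spanned by J₁ ∪ J₂
  have hSspan : P ∪ Q ⊆ M.closure (J₁ ∪ J₂) := by
    rintro a (haP | haQ)
    · have h1 : a ∈ M.closure J₂ := by
        rw [hJ₂basis.closure_eq_closure]
        exact M.mem_closure_of_mem' (Or.inr haP) (hPQE (Or.inl haP))
      exact M.closure_subset_closure subset_union_right h1
    · have h1 : a ∈ M.closure J₁ := by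
        rw [hJ₁basis.closure_eq_closure]
        exact M.mem_closure_of_mem' (Or.inr haQ) (hPQE (Or.inr haQ))
      exact M.closure_subset_closure subset_union_left h1
  have hcard : (P ∪ Q).encard ≤ (J₁ ∪ J₂).encard :=
    encard_le_of_indep_subset_closure' hPQ
      (union_subset (hJ₁basis.indep.subset_ground) (hJ₂basis.indep.subset_ground)) hSspan
  -- finiteness
  have hfin : ∀ Y : Set α, Y ⊆ M.E → Y.Finite := fun Y hY => M.set_finite Y hY
  have hfinJ₁ : J₁.Finite := hfin _ hJ₁basis.indep.subset_ground
  have hfinJ₂ : J₂.Finite := hfin _ hJ₂basis.indep.subset_ground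
  have hfinX : X.Finite := hfin _ (hXsub.trans hTE)
  have hfinP : P.Finite := hfin _ (fun a ha => hPQE (Or.inl ha))
  have hfinQ : Q.Finite := hfin _ (fun a ha => hPQE (Or.inr ha))
  have hfinX₁ : X₁.Finite := hfinX.subset subset_union_left
  have hfinX₂ : X₂.Finite := hfinX.subset subset_union_right
  have hfinRB : (R ∩ B).Finite := hfinX₁.subset subset_union_left
  -- turn everything into ncard
  have hdisjPX₂ : Disjoint P X₂ := by
    refine Set.disjoint_left.mpr ?_
    intro a haP haX₂
    exact (hPQT.le_bot ⟨Or.inl haP, hA haX₂.2⟩ : False)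
  have hdisjQRB : Disjoint Q (R ∩ B) := by
    refine Set.disjoint_left.mpr ?_
    intro a haQ haRB
    exact (hPQT.le_bot ⟨Or.inr haQ, hB haRB.2⟩ : False)
  have hdisjX₁X₂ : Disjoint X₁ X₂ := by
    refine Set.disjoint_left.mpr ?_
    rintro a (haRB | rfl) haX₂
    · exact (hAB.le_bot ⟨haX₂.2, haRB.2⟩ : False)
    · exact heA haX₂.2
  have heRB : e ∉ R ∩ B := fun hc => heB hc.2
  -- ncard equations
  have hn2 : J₂.ncard = P.ncard + X₂.ncard := by
    have h0 : J₂.ncard = (P ∪ X₂).ncard := by rw [Set.ncard_def, Set.ncard_def, hc2]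
    rw [h0, Set.ncard_union_eq hdisjPX₂ hfinP hfinX₂]
  have hn1 : J₁.ncard = Q.ncard + (R ∩ B).ncard := by
    have h0 : J₁.ncard = (Q ∪ (R ∩ B)).ncard := by rw [Set.ncard_def, Set.ncard_def, hc1]
    rw [h0, Set.ncard_union_eq hdisjQRB hfinQ hfinRB]
  have hnX₁ : X₁.ncard = (R ∩ B).ncard + 1 := by
    rw [hX₁, Set.union_singleton, Set.ncard_insert_of_notMem heRB hfinRB]
  have hnX : X.ncard = X₁.ncard + X₂.ncard := Set.ncard_union_eq hdisjX₁X₂ hfinX₁ hfinX₂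
  have hnJ₂split : J₂.ncard = X.ncard + (J₂ \ X).ncard := by
    rw [← Set.ncard_union_eq disjoint_sdiff_right hfinX (hfinJ₂.subset diff_subset),
      Set.union_diff_cancel hXJ₂]
  have hnJ₁split : J₁.ncard = X.ncard + (J₁ \ X).ncard := by
    rw [← Set.ncard_union_eq disjoint_sdiff_right hfinX (hfinJ₁.subset diff_subset),
      Set.union_diff_cancel hXJ₁]
  have hnPQ : (P ∪ Q).ncard = P.ncard + Q.ncard := Set.ncard_union_eq hdPQ hfinP hfinQ
  have hnUnion : (J₁ ∪ J₂).ncard ≤ X.ncard + ((J₁ \ X).ncard + (J₂ \ X).ncard) := by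
    have hsub : J₁ ∪ J₂ ⊆ X ∪ ((J₁ \ X) ∪ (J₂ \ X)) := by
      intro a ha
      by_cases haX : a ∈ X
      · exact Or.inl haX
      · rcases ha with h | h
        · exact Or.inr (Or.inl ⟨h, haX⟩)
        · exact Or.inr (Or.inr ⟨h, haX⟩)
    calc (J₁ ∪ J₂).ncard ≤ (X ∪ ((J₁ \ X) ∪ (J₂ \ X))).ncard :=
          Set.ncard_le_ncard hsub
            (hfinX.union ((hfinJ₁.subset diff_subset).union (hfinJ₂.subset diff_subset)))
      _ ≤ X.ncard + ((J₁ \ X) ∪ (J₂ \ X)).ncard := Set.ncard_union_le _ _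
      _ ≤ X.ncard + ((J₁ \ X).ncard + (J₂ \ X).ncard) := by
          exact Nat.add_le_add_left (Set.ncard_union_le _ _) _
  have hcardn : (P ∪ Q).ncard ≤ (J₁ ∪ J₂).ncard := by
    have h1 := hcard
    rw [Set.ncard_def, Set.ncard_def]
    exact ENat.toNat_le_toNat h1 ((hfinJ₁.union hfinJ₂).encard_lt_top.ne)
  omega

end Counting


section Assemble

variable {TT P Q : Set α}

lemma good_ext [M.Finite] (hTT : M.Indep TT)
    (hPQ : M.Indep (P ∪ Q)) (hdPQ : Disjoint P Q) (hPQT : Disjoint (P ∪ Q) TT)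
    {A B : Set α} {e : α}
    (hA : A ⊆ TT) (hB : B ⊆ TT) (he : e ∈ TT) (hAB : Disjoint A B) (heAB : e ∉ A ∪ B)
    (hIA : M.Indep (P ∪ A)) (hIB : M.Indep (Q ∪ B)) :
    ∃ A' B', A' ∪ B' = A ∪ B ∪ {e} ∧ Disjoint A' B' ∧ M.Indep (P ∪ A') ∧ M.Indep (Q ∪ B') := by
  obtain ⟨l, w, h1, h2, h3⟩ :=
    exists_free_path hTT hPQ hdPQ hPQT hA hB he hAB heAB hIA hIB
  exact step_all hTT (e :: l).length P Q A B e hPQT hA hB he hAB heAB hIA hIB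
    ⟨l, w, h1, h2, h3, rfl⟩

lemma extend_all [M.Finite] (hTT : M.Indep TT)
    (hPQ : M.Indep (P ∪ Q)) (hdPQ : Disjoint P Q) (hPQT : Disjoint (P ∪ Q) TT)
    (U : Set α) (hU : U ⊆ TT) :
    ∃ A B, A ∪ B = U ∧ Disjoint A B ∧ M.Indep (P ∪ A) ∧ M.Indep (Q ∪ B) := by
  have hUfin : U.Finite := (M.set_finite TT hTT.subset_ground).subset hU
  generalize hn : U.ncard = n
  induction n generalizing U with
  | zero =>
    have : U = ∅ := (Set.ncard_eq_zero hUfin).mp hn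
    subst this
    exact ⟨∅, ∅, by simp, disjoint_empty _, by simpa using hPQ.subset subset_union_left,
      by simpa using hPQ.subset subset_union_right⟩
  | succ n ih =>
    obtain ⟨e, heU⟩ : U.Nonempty := Set.nonempty_of_ncard_ne_zero (by omega)
    set U' : Set α := U \ {e} with hU'
    have hU'sub : U' ⊆ TT := (diff_subset).trans hU
    have hU'fin : U'.Finite := hUfin.subset diff_subset
    have hU'card : U'.ncard = n := by
      rw [hU', Set.ncard_diff_singleton_of_mem heU]; omega
    obtain ⟨A, B, hABU, hAB, hIA, hIB⟩ := ih U' hU'sub hU'fin hU'card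
    have heAB : e ∉ A ∪ B := by rw [hABU]; exact fun hc => hc.2 rfl
    have hAT : A ⊆ TT := (hABU ▸ subset_union_left : A ⊆ U').trans hU'sub
    have hBT : B ⊆ TT := (hABU ▸ subset_union_right : B ⊆ U').trans hU'sub
    obtain ⟨A', B', hA'B', hd, h1, h2⟩ :=
      good_ext hTT hPQ hdPQ hPQT hAT hBT (hU heU) hAB heAB hIA hIB
    refine ⟨A', B', ?_, hd, h1, h2⟩
    rw [hA'B', hABU, Set.union_singleton, hU', Set.insert_diff_singleton,
      Set.insert_eq_of_mem heU]

end Assemble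

end StmtAux

/-- Let `S` and `T` be independent sets of a (finite) matroid `M`.
Then for every partition of `S` into two disjoint parts `S₁, S₂`, there exists a
partition of `T` into two disjoint parts `T₁, T₂` such that both `S₁ ∪ T₂` and
`S₂ ∪ T₁` are independent in `M`. -/
theorem statement1 {α : Type*} (M : Matroid α) [M.Finite]
    (S T : Set α) (hS : M.Indep S) (hT : M.Indep T)
    (S₁ S₂ : Set α) (hSparts : S = S₁ ∪ S₂) (hSdisj : Disjoint S₁ S₂) :
    ∃ T₁ T₂ : Set α, T = T₁ ∪ T₂ ∧ Disjoint T₁ T₂ ∧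
      M.Indep (S₁ ∪ T₂) ∧ M.Indep (S₂ ∪ T₁) := by
  have hT' : M.Indep (T \ S) := hT.subset diff_subset
  have hPQ : M.Indep (S₂ ∪ S₁) := by rw [Set.union_comm, ← hSparts]; exact hS
  have hdPQ : Disjoint S₂ S₁ := hSdisj.symm
  have hPQT : Disjoint (S₂ ∪ S₁) (T \ S) := by
    refine Set.disjoint_left.mpr ?_
    intro a ha haT
    apply haT.2
    rw [hSparts]
    rcases ha with h | h
    · exact Or.inr h
    · exact Or.inl h
  obtain ⟨A, B, hABU, hAB, hIA, hIB⟩ :=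
    StmtAux.extend_all hT' hPQ hdPQ hPQT (T \ S) subset_rfl
  have hAT : A ⊆ T \ S := hABU ▸ Set.subset_union_left
  have hBT : B ⊆ T \ S := hABU ▸ Set.subset_union_right
  refine ⟨A ∪ (S₂ ∩ T), B ∪ (S₁ ∩ T), ?_, ?_, ?_, ?_⟩
  · ext a
    simp only [Set.mem_union, Set.mem_inter_iff]
    constructor
    · intro haT
      by_cases haS : a ∈ S
      · rw [hSparts] at haS
        rcases haS with h | h
        · exact Or.inr (Or.inr ⟨h, haT⟩)
        · exact Or.inl (Or.inr ⟨h, haT⟩)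
      · have : a ∈ A ∪ B := by rw [hABU]; exact ⟨haT, haS⟩
        rcases this with h | h
        · exact Or.inl (Or.inl h)
        · exact Or.inr (Or.inl h)
    · rintro ((h | h) | (h | h))
      · exact (hAT h).1
      · exact h.2
      · exact (hBT h).1
      · exact h.2
  · refine Set.disjoint_left.mpr ?_
    rintro a (haA | haS2) (haB | haS1)
    · exact (hAB.le_bot ⟨haA, haB⟩ : False)
    · exact (hAT haA).2 (hSparts ▸ Or.inl haS1.1)
    · exact (hBT haB).2 (hSparts ▸ Or.inr haS2.1)
    · exact (hSdisj.le_bot ⟨haS1.1, haS2.1⟩ : False)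
  · have hset : S₁ ∪ (B ∪ S₁ ∩ T) = S₁ ∪ B := by
      ext a
      simp only [Set.mem_union, Set.mem_inter_iff]
      tauto
    rw [hset]
    exact hIB
  · have hset : S₂ ∪ (A ∪ S₂ ∩ T) = S₂ ∪ A := by
      ext a
      simp only [Set.mem_union, Set.mem_inter_iff]
      tauto
    rw [hset]
    exact hIA
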